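/- Let p(x) = p₃x³ + p₂x² + p₁x + p₀ be a real cubic polynomial with p₃ > 0 and p₀ ≥ 0. If p₁ ≥ 0 and p₂ ≥ −√(3p₁p₃), then p(x) ≥ 0 for all x ≥ 0. -/
import Mathlib

/-- sufficient condition (a) for nonnegativity of a cubic on `[0, ∞)`. -/
theorem stmt_3 (p₀ p₁ p₂ p₃ : ℝ) (h₃ : 0 < p₃) (h₀ : 0 ≤ p₀)
    (h₁ : 0 ≤ p₁) (h₂ : -Real.sqrt (3 * p₁ * p₃) ≤ p₂) :
    ∀ x : ℝ, 0 ≤ x → 0 ≤ p₃ * x ^ 3 + p₂ * x ^ 2 + p₁ * x + p₀ := by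
  intro x hx
  set s := Real.sqrt (3 * p₁ * p₃) with hs
  have hsnn : 0 ≤ s := Real.sqrt_nonneg _
  have ha : Real.sqrt p₁ ^ 2 = p₁ := Real.sq_sqrt h₁
  have hb : Real.sqrt p₃ ^ 2 = p₃ := Real.sq_sqrt h₃.le
  have hle : s ≤ 2 * Real.sqrt p₁ * Real.sqrt p₃ := by
    have htnn : 0 ≤ 2 * Real.sqrt p₁ * Real.sqrt p₃ := by positivity
    have hsq : s ^ 2 ≤ (2 * Real.sqrt p₁ * Real.sqrt p₃) ^ 2 := by
      rw [hs, Real.sq_sqrt (by positivity)]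
      nlinarith [Real.sqrt_nonneg p₁, Real.sqrt_nonneg p₃]
    nlinarith [hsq, mul_nonneg (add_nonneg hsnn htnn) hsnn]
  have key : s * x ^ 2 ≤ p₃ * x ^ 3 + p₁ * x := by
    nlinarith [mul_nonneg hx (sq_nonneg (Real.sqrt p₃ * x - Real.sqrt p₁)),
      sq_nonneg x, mul_nonneg (mul_nonneg hx hx) hx]
  nlinarith [sq_nonneg x, mul_le_mul_of_nonneg_right h₂ (sq_nonneg x)]
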